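/- Let X ∈ ℝ^{t×k}, Z ∈ ℝ^{t×d}, H ∈ ℝ^{d×k}. Define R̂ = (1/t)(Z − X Hᵀ)ᵀ(Z − X Hᵀ), and assume R̂ and Hᵀ R̂^{-1} H are invertible. For each j ∈ {1,…,k}, the j-th column of R̂^{-1} H (Hᵀ R̂^{-1} H)^{-1} is the unique solution b_j of the constrained least squares problem: minimize ‖X e_j − Z b_j‖₂² subject to Hᵀ b_j = e_j, where X e_j denotes the j-th column of X and e_j ∈ ℝ^k is the j-th standard basis vector. -/

import Mathlib

open Matrix

private lemma colmul {m n p : ℕ} (A : Matrix (Fin m) (Fin n) ℝ)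
    (B : Matrix (Fin n) (Fin p) ℝ) (c : Fin p) :
    (A *ᵥ fun i => B i c) = fun l => (A * B) l c := by
  funext l
  simp [Matrix.mulVec, Matrix.mul_apply, dotProduct]

theorem stmt5 {t k d : ℕ} (X : Matrix (Fin t) (Fin k) ℝ) (Z : Matrix (Fin t) (Fin d) ℝ)
    (H : Matrix (Fin d) (Fin k) ℝ)
    (Rhat : Matrix (Fin d) (Fin d) ℝ)
    (hRhat : Rhat = (1 / (t : ℝ)) • ((Z - X * Hᵀ)ᵀ * (Z - X * Hᵀ)))
    (hRinv : IsUnit Rhat.det) (hHRH : IsUnit (Hᵀ * Rhat⁻¹ * H).det)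
    (j : Fin k) (b₀ : Fin d → ℝ)
    (hb₀ : b₀ = fun i => (Rhat⁻¹ * H * (Hᵀ * Rhat⁻¹ * H)⁻¹) i j) :
    (Hᵀ *ᵥ b₀ = Pi.single j 1) ∧
    (∀ b : Fin d → ℝ, Hᵀ *ᵥ b = Pi.single j 1 →
      ∑ i, (X i j - (Z *ᵥ b₀) i) ^ 2 ≤ ∑ i, (X i j - (Z *ᵥ b) i) ^ 2) ∧
    (∀ b : Fin d → ℝ, Hᵀ *ᵥ b = Pi.single j 1 →
      (∀ b' : Fin d → ℝ, Hᵀ *ᵥ b' = Pi.single j 1 →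
        ∑ i, (X i j - (Z *ᵥ b) i) ^ 2 ≤ ∑ i, (X i j - (Z *ᵥ b') i) ^ 2) →
      b = b₀) := by
  have ht : (t : ℝ) ≠ 0 := by
    intro h0
    have ht0 : t = 0 := by exact_mod_cast h0
    subst ht0
    rcases Nat.eq_zero_or_pos d with hd | hd
    · subst hd
      have hz : Hᵀ * Rhat⁻¹ * H = 0 := by
        ext a b
        simp [Matrix.mul_apply]
      rw [hz, (haveI : Nonempty (Fin k) := ⟨j⟩; Matrix.det_zero)] at hHRH
      simpa using hHRH
    · have hR0 : Rhat = 0 := by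
        simpa using hRhat
      rw [hR0, (haveI : Nonempty (Fin d) := ⟨⟨0, hd⟩⟩; Matrix.det_zero)] at hRinv
      simpa using hRinv
  set M := Z - X * Hᵀ with hM
  have hN : Mᵀ * M = (t : ℝ) • Rhat := by
    rw [hRhat, smul_smul, mul_one_div_cancel ht, one_smul]
  have hG : (Hᵀ * Rhat⁻¹ * H) * (Hᵀ * Rhat⁻¹ * H)⁻¹ = 1 :=
    Matrix.mul_nonsing_inv _ hHRH
  have hHB : Hᵀ * (Rhat⁻¹ * H * (Hᵀ * Rhat⁻¹ * H)⁻¹) = 1 := by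
    rw [← Matrix.mul_assoc, ← Matrix.mul_assoc]
    exact hG
  have h1 : Hᵀ *ᵥ b₀ = Pi.single j 1 := by
    rw [hb₀, colmul, hHB]
    funext l
    simp [Matrix.one_apply, Pi.single_apply]
  have hNB : (Mᵀ * M) * (Rhat⁻¹ * H * (Hᵀ * Rhat⁻¹ * H)⁻¹)
      = (t : ℝ) • (H * (Hᵀ * Rhat⁻¹ * H)⁻¹) := by
    rw [hN, Matrix.smul_mul, ← Matrix.mul_assoc, ← Matrix.mul_assoc,
      Matrix.mul_nonsing_inv _ hRinv, Matrix.one_mul]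
  have horth : ∀ w : Fin d → ℝ, Hᵀ *ᵥ w = 0 → (M *ᵥ w) ⬝ᵥ (M *ᵥ b₀) = 0 := by
    intro w hw
    have h2 : Mᵀ *ᵥ (M *ᵥ b₀)
        = (t : ℝ) • (H *ᵥ fun i => (Hᵀ * Rhat⁻¹ * H)⁻¹ i j) := by
      rw [Matrix.mulVec_mulVec, hb₀, colmul, colmul, hNB]
      funext l
      simp
    calc (M *ᵥ w) ⬝ᵥ (M *ᵥ b₀)
        = w ⬝ᵥ (Mᵀ *ᵥ (M *ᵥ b₀)) := by
          rw [dotProduct_comm, Matrix.dotProduct_mulVec, ← Matrix.mulVec_transpose,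
            dotProduct_comm]
      _ = (t : ℝ) * ((Hᵀ *ᵥ w) ⬝ᵥ fun i => (Hᵀ * Rhat⁻¹ * H)⁻¹ i j) := by
          rw [h2, dotProduct_smul, Matrix.dotProduct_mulVec, ← Matrix.mulVec_transpose]
          simp
      _ = 0 := by rw [hw, zero_dotProduct, mul_zero]
  have hred : ∀ b : Fin d → ℝ, Hᵀ *ᵥ b = Pi.single j 1 →
      ∀ i, X i j - (Z *ᵥ b) i = -((M *ᵥ b) i) := by
    intro b hb i
    have hZ : Z *ᵥ b = M *ᵥ b + X *ᵥ Pi.single j 1 := by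
      have hZM : Z = M + X * Hᵀ := by rw [hM, sub_add_cancel]
      rw [hZM, Matrix.add_mulVec, ← Matrix.mulVec_mulVec, hb]
    have hx : (X *ᵥ Pi.single j 1) i = X i j := by
      simp [Matrix.mulVec, dotProduct, Pi.single_apply]
    rw [hZ]
    simp only [Pi.add_apply, hx]
    ring
  have hdecomp : ∀ b : Fin d → ℝ, Hᵀ *ᵥ b = Pi.single j 1 →
      ∑ i, (X i j - (Z *ᵥ b) i) ^ 2
        = ∑ i, (X i j - (Z *ᵥ b₀) i) ^ 2 + ∑ i, ((M *ᵥ (b - b₀)) i) ^ 2 := by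
    intro b hb
    have hw : Hᵀ *ᵥ (b - b₀) = 0 := by
      rw [Matrix.mulVec_sub, hb, h1, sub_self]
    have ho : (M *ᵥ b₀) ⬝ᵥ (M *ᵥ (b - b₀)) = 0 := by
      rw [dotProduct_comm]; exact horth _ hw
    have ho' : ∑ i, (M *ᵥ b₀) i * (M *ᵥ (b - b₀)) i = 0 := ho
    have e0 : ∀ i, (X i j - (Z *ᵥ b₀) i) ^ 2 = ((M *ᵥ b₀) i) ^ 2 := by
      intro i; rw [hred b₀ h1 i, neg_sq]
    calc ∑ i, (X i j - (Z *ᵥ b) i) ^ 2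
        = ∑ i, (((M *ᵥ b₀) i) ^ 2 + 2 * ((M *ᵥ b₀) i * (M *ᵥ (b - b₀)) i)
            + ((M *ᵥ (b - b₀)) i) ^ 2) := by
          refine Finset.sum_congr rfl fun i _ => ?_
          rw [hred b hb i, neg_sq]
          have hbi : (M *ᵥ b) i = (M *ᵥ b₀) i + (M *ᵥ (b - b₀)) i := by
            rw [Matrix.mulVec_sub]
            simp
          rw [hbi]; ring
      _ = ∑ i, ((M *ᵥ b₀) i) ^ 2 + 2 * ∑ i, (M *ᵥ b₀) i * (M *ᵥ (b - b₀)) i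
            + ∑ i, ((M *ᵥ (b - b₀)) i) ^ 2 := by
          rw [Finset.sum_add_distrib, Finset.sum_add_distrib, Finset.mul_sum]
      _ = ∑ i, (X i j - (Z *ᵥ b₀) i) ^ 2 + ∑ i, ((M *ᵥ (b - b₀)) i) ^ 2 := by
          rw [ho', mul_zero, add_zero]
          congr 1
          exact Finset.sum_congr rfl fun i _ => (e0 i).symm
  refine ⟨h1, ?_, ?_⟩
  · intro b hb
    rw [hdecomp b hb]
    exact le_add_of_nonneg_right (Finset.sum_nonneg fun i _ => sq_nonneg _)
  · intro b hb hmin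
    have h₂ := hmin b₀ h1
    have h₃ := hdecomp b hb
    have hle : ∑ i, ((M *ᵥ (b - b₀)) i) ^ 2 ≤ 0 := by linarith
    have hzero : ∑ i, ((M *ᵥ (b - b₀)) i) ^ 2 = 0 :=
      le_antisymm hle (Finset.sum_nonneg fun i _ => sq_nonneg _)
    have hc0 : ∀ i, (M *ᵥ (b - b₀)) i = 0 := by
      intro i
      have := (Finset.sum_eq_zero_iff_of_nonneg (fun i _ => sq_nonneg _)).mp hzero i
        (Finset.mem_univ i)
      exact pow_eq_zero_iff two_ne_zero |>.mp this
    have hMc : M *ᵥ (b - b₀) = 0 := funext hc0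
    have hNc : (Mᵀ * M) *ᵥ (b - b₀) = 0 := by
      rw [← Matrix.mulVec_mulVec, hMc, Matrix.mulVec_zero]
    rw [hN, Matrix.smul_mulVec] at hNc
    have hRc : Rhat *ᵥ (b - b₀) = 0 := (smul_eq_zero.mp hNc).resolve_left ht
    have hsub : b - b₀ = 0 := by
      have h4 := congrArg (fun v => Rhat⁻¹ *ᵥ v) hRc
      simpa [Matrix.mulVec_mulVec, Matrix.nonsing_inv_mul _ hRinv] using h4
    exact sub_eq_zero.mp hsub
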